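/- (Spectral decomposition of Γ.) Let H be a complex Hilbert space, q ∈ ℝ with 0 < |q| < 1, and α a bounded operator on H satisfying α α* − q² α* α = (1 − q²)·1; set Γ := 1 − α* α and assume Γ is injective. With P_0 := 1, P_k := (α*)^k (1 − q² Γ)^{−1} ⋯ (1 − q^{2k} Γ)^{−1} α^k for k ≥ 1, and E_k := P_k − P_{k+1} for k ≥ 0, the following hold: P_k → 0 in the strong operator topology as k → ∞ (so the E_k sum strongly to the identity), and Γ = Σ_{k=0}^{∞} q^{2k} E_k, with the series converging in operator norm. -/

import Mathlib

open ContinuousLinearMap Filter Finset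

/-- Given `α` and `q`, let `Γ := 1 − α* α` and define
`P_k := (α*)^k (1 − q²Γ)⁻¹ (1 − q⁴Γ)⁻¹ ⋯ (1 − q^{2k}Γ)⁻¹ α^k` (with `P_0 = 1`),
where the inverses are taken in the Banach algebra `B(H)` (via `Ring.inverse`). -/
noncomputable def qCCRProj {H : Type*} [NormedAddCommGroup H] [InnerProductSpace ℂ H]
    [CompleteSpace H] (q : ℝ) (α : H →L[ℂ] H) (k : ℕ) : H →L[ℂ] H :=
  (adjoint α) ^ k *
    ((List.range k).map (fun j =>
      Ring.inverse ((1 : H →L[ℂ] H) -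
        ((q : ℂ) ^ (2 * (j + 1))) • ((1 : H →L[ℂ] H) - adjoint α * α)))).prod *
    α ^ k

/-- The spectral projections `E_k := P_k − P_{k+1}`. -/
noncomputable def qCCRSpec {H : Type*} [NormedAddCommGroup H] [InnerProductSpace ℂ H]
    [CompleteSpace H] (q : ℝ) (α : H →L[ℂ] H) (k : ℕ) : H →L[ℂ] H :=
  qCCRProj q α k - qCCRProj q α (k + 1)

namespace QCCR

variable {H : Type*} [NormedAddCommGroup H] [InnerProductSpace ℂ H] [CompleteSpace H]

lemma qsq_pow_lt_one {q : ℝ} (hq1 : |q| < 1) (j : ℕ) : (q ^ 2) ^ (j + 1) < 1 := by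
  have hq2 : q ^ 2 < 1 := by nlinarith [sq_abs q, abs_nonneg q]
  exact pow_lt_one₀ (sq_nonneg q) hq2 (Nat.succ_ne_zero j)

lemma inv_one_sub_le_exp {b y : ℝ} (hb1 : b < 1) (hy0 : 0 ≤ y) (hyb : y ≤ b) :
    (1 - y)⁻¹ ≤ Real.exp (y / (1 - b)) := by
  have h1 : (0 : ℝ) < 1 - y := by linarith
  have h2 : (0 : ℝ) < 1 - b := by linarith
  rw [inv_eq_one_div, div_le_iff₀ h1]
  have h3 : y / (1 - b) + 1 ≤ Real.exp (y / (1 - b)) := Real.add_one_le_exp _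
  have h6 : y ≤ y * (1 - y) / (1 - b) := by
    rw [le_div_iff₀ h2]
    nlinarith
  have h5 : (y / (1 - b) + 1) * (1 - y) = y * (1 - y) / (1 - b) + (1 - y) := by ring
  have h4 : (1 : ℝ) ≤ (y / (1 - b) + 1) * (1 - y) := by rw [h5]; linarith
  calc (1 : ℝ) ≤ (y / (1 - b) + 1) * (1 - y) := h4
  _ ≤ Real.exp (y / (1 - b)) * (1 - y) := mul_le_mul_of_nonneg_right h3 h1.le

/-- The uniform constant bounding `‖R_k‖`. -/
noncomputable def Cq (q : ℝ) : ℝ := Real.exp (q ^ 2 / ((1 - q ^ 2) * (1 - q ^ 2)))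

lemma commute_ring_inverse_right {M₀ : Type*} [MonoidWithZero M₀] {x y : M₀}
    (hy : IsUnit y) (h : Commute x y) : Commute x (Ring.inverse y) := by
  obtain ⟨u, rfl⟩ := hy
  rw [Ring.inverse_unit]
  exact h.units_inv_right

noncomputable def Gam (α : H →L[ℂ] H) : H →L[ℂ] H := 1 - adjoint α * α

noncomputable def g (q : ℝ) (α : H →L[ℂ] H) (j : ℕ) : H →L[ℂ] H :=
  1 - ((q : ℂ) ^ (2 * (j + 1))) • Gam α

noncomputable def RR (q : ℝ) (α : H →L[ℂ] H) (k : ℕ) : H →L[ℂ] H :=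
  ((List.range k).map (fun j => Ring.inverse (g q α j))).prod

noncomputable def DD (q : ℝ) (α : H →L[ℂ] H) (k : ℕ) : H →L[ℂ] H :=
  ((List.range k).map (g q α)).prod

noncomputable def DD' (q : ℝ) (α : H →L[ℂ] H) (k : ℕ) : H →L[ℂ] H :=
  ((List.range k).map (fun j => g q α (j + 1))).prod

variable (q : ℝ) (α : H →L[ℂ] H)

section defeq

example (k : ℕ) : True := trivial

lemma qCCRProj_eq (k : ℕ) :
    (adjoint α) ^ k *
    ((List.range k).map (fun j =>
      Ring.inverse ((1 : H →L[ℂ] H) -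
        ((q : ℂ) ^ (2 * (j + 1))) • ((1 : H →L[ℂ] H) - adjoint α * α)))).prod *
    α ^ k = (adjoint α) ^ k * RR q α k * α ^ k := rfl

end defeq

section algebra

variable (hccr : α * adjoint α - ((q : ℂ) ^ 2) • (adjoint α * α) =
      ((1 : ℂ) - (q : ℂ) ^ 2) • (1 : H →L[ℂ] H))

include hccr

lemma haad : α * adjoint α = 1 - ((q : ℂ) ^ 2) • Gam α := by
  have h := hccr
  rw [sub_eq_iff_eq_add] at h
  rw [h, Gam]
  module

lemma comm_alpha_Gam : α * Gam α = ((q : ℂ) ^ 2) • (Gam α * α) := by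
  have h := haad q α hccr
  calc α * Gam α = α - α * adjoint α * α := by rw [Gam, mul_sub, mul_one, mul_assoc]
  _ = α - (1 - ((q : ℂ) ^ 2) • Gam α) * α := by rw [h]
  _ = ((q : ℂ) ^ 2) • (Gam α * α) := by rw [sub_mul, one_mul, smul_mul_assoc]; abel

lemma comm_Gam_adj : Gam α * adjoint α = ((q : ℂ) ^ 2) • (adjoint α * Gam α) := by
  have h := haad q α hccr
  calc Gam α * adjoint α = adjoint α - adjoint α * (α * adjoint α) := by
        rw [Gam, sub_mul, one_mul, mul_assoc]
  _ = adjoint α - adjoint α * (1 - ((q : ℂ) ^ 2) • Gam α) := by rw [h]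
  _ = ((q : ℂ) ^ 2) • (adjoint α * Gam α) := by rw [mul_sub, mul_one, mul_smul_comm]; abel


lemma apply_eq (ξ : H) :
    ‖adjoint α ξ‖ ^ 2 = (1 - q ^ 2) * ‖ξ‖ ^ 2 + q ^ 2 * ‖α ξ‖ ^ 2 := by
  have h2 := congrArg (fun T : H →L[ℂ] H => (inner ℂ ξ (T ξ) : ℂ)) hccr
  simp only [ContinuousLinearMap.sub_apply, ContinuousLinearMap.smul_apply, ContinuousLinearMap.mul_apply, ContinuousLinearMap.one_apply, inner_sub_right,
    inner_smul_right] at h2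
  have hA : (inner ℂ ξ (α (adjoint α ξ)) : ℂ) = (‖adjoint α ξ‖ : ℂ) ^ 2 := by
    have h := adjoint_inner_right (adjoint α) ξ (adjoint α ξ)
    rw [adjoint_adjoint] at h
    rw [h, inner_self_eq_norm_sq_to_K]
    norm_cast
  have hB : (inner ℂ ξ (adjoint α (α ξ)) : ℂ) = (‖α ξ‖ : ℂ) ^ 2 := by
    rw [adjoint_inner_right, inner_self_eq_norm_sq_to_K]
    norm_cast
  rw [hA, hB, inner_self_eq_norm_sq_to_K] at h2
  norm_cast at h2
  have h2'' : ((‖adjoint α ξ‖ ^ 2 - q ^ 2 * ‖α ξ‖ ^ 2 : ℝ) : ℂ) =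
      ((1 - q ^ 2 : ℝ) : ℂ) * ((‖ξ‖ ^ 2 : ℝ) : ℂ) := h2
  have h2' : ‖adjoint α ξ‖ ^ 2 - q ^ 2 * ‖α ξ‖ ^ 2 = (1 - q ^ 2) * ‖ξ‖ ^ 2 := by
    exact_mod_cast h2''
  linarith [h2']

variable (hq1 : |q| < 1)
include hq1

lemma norm_alpha_le_one : ‖α‖ ≤ 1 := by
  set m := ‖α‖ with hm
  have hm0 : 0 ≤ m := norm_nonneg _
  have hq2 : q ^ 2 < 1 := by nlinarith [sq_abs q, abs_nonneg q]
  set c := (1 - q ^ 2) + q ^ 2 * m ^ 2 with hc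
  have hc0 : 0 ≤ c := by nlinarith
  have hb : ∀ ξ : H, ‖adjoint α ξ‖ ≤ Real.sqrt c * ‖ξ‖ := by
    intro ξ
    have h1 := apply_eq q α hccr ξ
    have h2 : ‖α ξ‖ ≤ m * ‖ξ‖ := α.le_opNorm ξ
    have h2' : ‖α ξ‖ ^ 2 ≤ (m * ‖ξ‖) ^ 2 := pow_le_pow_left₀ (norm_nonneg _) h2 2
    have h3 : ‖adjoint α ξ‖ ^ 2 ≤ c * ‖ξ‖ ^ 2 := by nlinarith [sq_nonneg q, norm_nonneg ξ]
    have h4 : Real.sqrt (‖adjoint α ξ‖ ^ 2) ≤ Real.sqrt (c * ‖ξ‖ ^ 2) :=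
      Real.sqrt_le_sqrt h3
    rwa [Real.sqrt_sq (norm_nonneg _), Real.sqrt_mul hc0,
      Real.sqrt_sq (norm_nonneg ξ)] at h4
  have hA : ‖adjoint α‖ ≤ Real.sqrt c := opNorm_le_bound _ (Real.sqrt_nonneg c) hb
  have heq : ‖adjoint α‖ = m := by
    rw [hm]
    exact (adjoint : (H →L[ℂ] H) ≃ₗᵢ⋆[ℂ] (H →L[ℂ] H)).norm_map α
  rw [heq] at hA
  have h5 : m ^ 2 ≤ c := by nlinarith [Real.sq_sqrt hc0, Real.sqrt_nonneg c]
  nlinarith [sq_nonneg (m - 1), sq_nonneg q]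

lemma norm_adj_le_one : ‖adjoint α‖ ≤ 1 := by
  have := norm_alpha_le_one q α hccr hq1
  rwa [(adjoint : (H →L[ℂ] H) ≃ₗᵢ⋆[ℂ] (H →L[ℂ] H)).norm_map α]

lemma norm_N_apply (ξ : H) : ‖(adjoint α * α) ξ‖ ≤ ‖α ξ‖ := by
  have hα := norm_alpha_le_one q α hccr hq1
  set N := adjoint α * α with hN
  have h1 : (inner ℂ (N ξ) (N ξ) : ℂ) = inner ℂ (α ξ) (α (N ξ)) :=
    adjoint_inner_left α (N ξ) (α ξ)
  have h2 : ‖N ξ‖ ^ 2 = Complex.re (inner ℂ (N ξ) (N ξ) : ℂ) :=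
    (inner_self_eq_norm_sq (𝕜 := ℂ) (N ξ)).symm
  have h3 : Complex.re (inner ℂ (α ξ) (α (N ξ)) : ℂ) ≤ ‖α ξ‖ * ‖N ξ‖ := by
    have := norm_inner_le_norm (𝕜 := ℂ) (α ξ) (α (N ξ))
    have h4 : ‖α (N ξ)‖ ≤ ‖N ξ‖ := by
      have := α.le_opNorm (N ξ)
      nlinarith [norm_nonneg (N ξ)]
    have h5 := Complex.re_le_norm (inner ℂ (α ξ) (α (N ξ)) : ℂ)
    have h6 : ‖(inner ℂ (α ξ) (α (N ξ)) : ℂ)‖ = ‖(inner ℂ (α ξ) (α (N ξ)) : ℂ)‖ := rfl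
    nlinarith [norm_nonneg (α ξ)]
  rw [h1] at h2
  nlinarith [norm_nonneg (N ξ), norm_nonneg (α ξ)]

lemma norm_Gam_apply (ξ : H) : ‖Gam α ξ‖ ≤ ‖ξ‖ := by
  set N := adjoint α * α with hN
  have h0 : Gam α ξ = ξ - N ξ := by rw [Gam, ContinuousLinearMap.sub_apply, ContinuousLinearMap.one_apply]
  have h1 : ‖ξ - N ξ‖ ^ 2 = ‖ξ‖ ^ 2 - 2 * Complex.re (inner ℂ ξ (N ξ) : ℂ) + ‖N ξ‖ ^ 2 :=
    norm_sub_sq (𝕜 := ℂ) ξ (N ξ)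
  have h2 : (inner ℂ ξ (N ξ) : ℂ) = (‖α ξ‖ : ℂ) ^ 2 := by
    rw [hN, ContinuousLinearMap.mul_apply, adjoint_inner_right, inner_self_eq_norm_sq_to_K]
    norm_cast
  have h3 : Complex.re (inner ℂ ξ (N ξ) : ℂ) = ‖α ξ‖ ^ 2 := by
    rw [h2]; norm_cast
  have h4 : ‖N ξ‖ ≤ ‖α ξ‖ := norm_N_apply q α hccr hq1 ξ
  have h5 : ‖ξ - N ξ‖ ^ 2 ≤ ‖ξ‖ ^ 2 := by
    rw [h1, h3]; nlinarith [norm_nonneg (N ξ), norm_nonneg (α ξ)]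
  rw [h0]
  nlinarith [norm_nonneg (ξ - N ξ), norm_nonneg ξ]

lemma norm_Gam_le_one : ‖Gam α‖ ≤ 1 :=
  opNorm_le_bound _ zero_le_one (by simpa using norm_Gam_apply q α hccr hq1)


-- ## Commutation and star lemmas

omit hccr hq1 in
lemma commute_g_of {x : H →L[ℂ] H} (hx : Commute x (Gam α)) (j : ℕ) :
    Commute x (g q α j) :=
  (Commute.one_right x).sub_right (hx.smul_right _)

omit hccr hq1 in
lemma commute_gam_g (j : ℕ) : Commute (Gam α) (g q α j) :=
  commute_g_of q α (Commute.refl _) j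

omit hccr hq1 in
lemma commute_g_g (i j : ℕ) : Commute (g q α i) (g q α j) :=
  commute_g_of q α (commute_gam_g q α i).symm j

omit hccr hq1 in
lemma star_Gam : star (Gam α) = Gam α := by
  rw [Gam, star_sub, star_one, star_mul, star_eq_adjoint, star_eq_adjoint, adjoint_adjoint]

omit hccr hq1 in
lemma star_g (j : ℕ) : star (g q α j) = g q α j := by
  rw [g, star_sub, star_one, star_smul, star_Gam]
  congr 1
  simp [star_pow, Complex.star_def, Complex.conj_ofReal]

omit hccr hq1 in
lemma star_inv_g (j : ℕ) : star (Ring.inverse (g q α j)) = Ring.inverse (g q α j) := by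
  rw [← Ring.inverse_star, star_g]

-- ## Units and norm bounds for the inverses

omit hccr hq1 in
lemma norm_coef (j : ℕ) : ‖((q : ℂ) ^ (2 * (j + 1)))‖ = (q ^ 2) ^ (j + 1) := by
  rw [norm_pow, Complex.norm_real, Real.norm_eq_abs, pow_mul, sq_abs]

lemma norm_qGam_le (j : ℕ) : ‖((q : ℂ) ^ (2 * (j + 1))) • Gam α‖ ≤ (q ^ 2) ^ (j + 1) := by
  have hΓ := norm_Gam_le_one q α hccr hq1
  rw [norm_smul, norm_coef]
  calc (q ^ 2) ^ (j + 1) * ‖Gam α‖ ≤ (q ^ 2) ^ (j + 1) * 1 := by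
        exact mul_le_mul_of_nonneg_left hΓ (by positivity)
  _ = (q ^ 2) ^ (j + 1) := mul_one _

lemma norm_qGam_lt (j : ℕ) : ‖((q : ℂ) ^ (2 * (j + 1))) • Gam α‖ < 1 :=
  lt_of_le_of_lt (norm_qGam_le q α hccr hq1 j) (qsq_pow_lt_one hq1 j)

lemma isUnit_g (j : ℕ) : IsUnit (g q α j) := by
  rw [g]
  exact isUnit_one_sub_of_norm_lt_one (norm_qGam_lt q α hccr hq1 j)

lemma commute_g_invg (i j : ℕ) : Commute (g q α i) (Ring.inverse (g q α j)) :=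
  commute_ring_inverse_right (isUnit_g q α hccr hq1 j) (commute_g_g q α i j)

lemma norm_inv_g_le (j : ℕ) :
    ‖Ring.inverse (g q α j)‖ ≤ (1 - (q ^ 2) ^ (j + 1))⁻¹ := by
  have ht : ‖((q : ℂ) ^ (2 * (j + 1))) • Gam α‖ < 1 := norm_qGam_lt q α hccr hq1 j
  rw [g, ← geom_series_eq_inverse _ ht]
  have h := tsum_geometric_le_of_norm_lt_one _ ht
  have h1 : ‖(1 : H →L[ℂ] H)‖ ≤ 1 := by
    rw [ContinuousLinearMap.one_def]; exact norm_id_le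
  have h2 : (1 - ‖((q : ℂ) ^ (2 * (j + 1))) • Gam α‖)⁻¹ ≤ (1 - (q ^ 2) ^ (j + 1))⁻¹ := by
    have h3 := norm_qGam_le q α hccr hq1 j
    have h4 : (0 : ℝ) < 1 - (q ^ 2) ^ (j + 1) := by linarith [qsq_pow_lt_one hq1 j]
    exact inv_anti₀ h4 (by linarith)
  linarith

-- ## Shift lemmas

omit hq1 in
lemma g_mul_adj (j : ℕ) : g q α j * adjoint α = adjoint α * g q α (j + 1) := by
  have hc : ((q : ℂ) ^ (2 * (j + 1))) * (q : ℂ) ^ 2 = (q : ℂ) ^ (2 * (j + 1 + 1)) := by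
    rw [← pow_add, show 2 * (j + 1) + 2 = 2 * (j + 1 + 1) from by ring]
  rw [g, g, sub_mul, one_mul, mul_sub, mul_one, smul_mul_assoc,
    comm_Gam_adj q α hccr, smul_smul, hc, mul_smul_comm]

omit hq1 in
lemma alpha_mul_g (j : ℕ) : α * g q α j = g q α (j + 1) * α := by
  have hc : ((q : ℂ) ^ (2 * (j + 1))) * (q : ℂ) ^ 2 = (q : ℂ) ^ (2 * (j + 1 + 1)) := by
    rw [← pow_add, show 2 * (j + 1) + 2 = 2 * (j + 1 + 1) from by ring]
  rw [g, g, mul_sub, mul_one, sub_mul, one_mul, mul_smul_comm,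
    comm_alpha_Gam q α hccr, smul_smul, hc, smul_mul_assoc]

lemma invg_mul_adj (j : ℕ) :
    Ring.inverse (g q α j) * adjoint α = adjoint α * Ring.inverse (g q α (j + 1)) := by
  have hj := isUnit_g q α hccr hq1 j
  have hj1 := isUnit_g q α hccr hq1 (j + 1)
  calc Ring.inverse (g q α j) * adjoint α
      = Ring.inverse (g q α j) * (adjoint α * g q α (j + 1) * Ring.inverse (g q α (j + 1))) := by
        rw [mul_assoc (adjoint α), Ring.mul_inverse_cancel _ hj1, mul_one]
  _ = Ring.inverse (g q α j) * g q α j * adjoint α * Ring.inverse (g q α (j + 1)) := by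
        rw [← g_mul_adj q α hccr]
        simp only [mul_assoc]
  _ = adjoint α * Ring.inverse (g q α (j + 1)) := by
        rw [Ring.inverse_mul_cancel _ hj, one_mul]

lemma alpha_mul_invg (j : ℕ) :
    α * Ring.inverse (g q α j) = Ring.inverse (g q α (j + 1)) * α := by
  have hj := isUnit_g q α hccr hq1 j
  have hj1 := isUnit_g q α hccr hq1 (j + 1)
  calc α * Ring.inverse (g q α j)
      = Ring.inverse (g q α (j + 1)) * (g q α (j + 1) * α) * Ring.inverse (g q α j) := by
        rw [← mul_assoc, Ring.inverse_mul_cancel _ hj1, one_mul]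
  _ = Ring.inverse (g q α (j + 1)) * α * (g q α j * Ring.inverse (g q α j)) := by
        rw [← alpha_mul_g q α hccr]
        simp only [mul_assoc]
  _ = Ring.inverse (g q α (j + 1)) * α := by
        rw [Ring.mul_inverse_cancel _ hj, mul_one]


-- ## List product lemmas

omit hccr hq1 in
lemma commute_list_map {x : H →L[ℂ] H} (f : ℕ → (H →L[ℂ] H)) (hx : ∀ j, Commute x (f j))
    (l : List ℕ) : Commute x ((l.map f).prod) := by
  apply Commute.list_prod_right
  intro y hy
  obtain ⟨j, -, rfl⟩ := List.mem_map.1 hy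
  exact hx j

omit hccr hq1 in
lemma RR_zero : RR q α 0 = 1 := by simp [RR]

omit hccr hq1 in
lemma DD_zero : DD q α 0 = 1 := by simp [DD]

omit hccr hq1 in
lemma DD'_zero : DD' q α 0 = 1 := by simp [DD']

omit hccr hq1 in
lemma RR_succ (k : ℕ) : RR q α (k + 1) = RR q α k * Ring.inverse (g q α k) := by
  rw [RR, RR, List.range_succ, List.map_append, List.prod_append]
  simp

omit hccr hq1 in
lemma DD_succ (k : ℕ) : DD q α (k + 1) = DD q α k * g q α k := by
  rw [DD, DD, List.range_succ, List.map_append, List.prod_append]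
  simp

omit hccr hq1 in
lemma DD'_succ (k : ℕ) : DD' q α (k + 1) = DD' q α k * g q α (k + 1) := by
  rw [DD', DD', List.range_succ, List.map_append, List.prod_append]
  simp

omit hccr hq1 in
lemma DD_succ_left (k : ℕ) : DD q α (k + 1) = g q α 0 * DD' q α k := by
  rw [DD, List.range_succ_eq_map, List.map_cons, List.prod_cons, List.map_map, DD']
  congr 1

omit hq1 in
lemma alpha_mul_DD (k : ℕ) : α * DD q α k = DD' q α k * α := by
  induction k with
  | zero => rw [DD_zero, DD'_zero, mul_one, one_mul]
  | succ k ih =>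
      rw [DD_succ, DD'_succ, ← mul_assoc, mul_assoc _ (g q α (k + 1)) α,
        ← alpha_mul_g q α hccr, ← mul_assoc, ← ih, mul_assoc]

omit hq1 in
lemma g_zero_eq : g q α 0 = 1 - ((q : ℂ) ^ 2) • Gam α := by
  rw [g]

omit hq1 in
lemma pow_mul_adj_pow (k : ℕ) : α ^ k * adjoint α ^ k = DD q α k := by
  induction k with
  | zero => simp [DD_zero]
  | succ k ih =>
      have hg0 : α * adjoint α = g q α 0 := by rw [haad q α hccr, g_zero_eq q α hccr]
      have hcom : Commute (g q α 0) (DD' q α k) :=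
        commute_list_map _ (fun j => commute_g_g q α 0 (j + 1)) _
      calc α ^ (k + 1) * adjoint α ^ (k + 1)
          = α * (α ^ k * adjoint α ^ k) * adjoint α := by
            rw [pow_succ' α k, pow_succ (adjoint α) k]
            simp only [mul_assoc]
      _ = DD' q α k * (α * adjoint α) := by rw [ih, ← mul_assoc, alpha_mul_DD q α hccr, mul_assoc]
      _ = DD' q α k * g q α 0 := by rw [hg0]
      _ = g q α 0 * DD' q α k := (hcom.symm).eq
      _ = DD q α (k + 1) := (DD_succ_left q α k).symm

lemma RR_mul_DD (k : ℕ) : RR q α k * DD q α k = 1 := by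
  induction k with
  | zero => rw [RR_zero, DD_zero, one_mul]
  | succ k ih =>
      have hcom : Commute (Ring.inverse (g q α k)) (DD q α k) :=
        commute_list_map _ (fun j => (commute_g_invg q α hccr hq1 j k).symm) _
      calc RR q α (k + 1) * DD q α (k + 1)
          = RR q α k * (Ring.inverse (g q α k) * DD q α k) * g q α k := by
            rw [RR_succ, DD_succ]; simp only [mul_assoc]
      _ = RR q α k * DD q α k * (Ring.inverse (g q α k) * g q α k) := by
            rw [hcom.eq]; simp only [mul_assoc]
      _ = 1 := by rw [ih, Ring.inverse_mul_cancel _ (isUnit_g q α hccr hq1 k), one_mul]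

lemma RR_adj_invg0 (k : ℕ) :
    RR q α k * adjoint α * Ring.inverse (g q α 0) = adjoint α * RR q α (k + 1) := by
  induction k with
  | zero => rw [RR_zero, one_mul, RR_succ, RR_zero, one_mul]
  | succ k ih =>
      have hcom : Commute (Ring.inverse (g q α (k + 1))) (Ring.inverse (g q α 0)) :=
        Commute.ringInverse_ringInverse (commute_g_g q α (k + 1) 0)
      calc RR q α (k + 1) * adjoint α * Ring.inverse (g q α 0)
          = RR q α k * (Ring.inverse (g q α k) * adjoint α) * Ring.inverse (g q α 0) := by
            rw [RR_succ]; simp only [mul_assoc]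
      _ = RR q α k * adjoint α * (Ring.inverse (g q α (k + 1)) * Ring.inverse (g q α 0)) := by
            rw [invg_mul_adj q α hccr hq1]; simp only [mul_assoc]
      _ = RR q α k * adjoint α * Ring.inverse (g q α 0) * Ring.inverse (g q α (k + 1)) := by
            rw [hcom.eq]; simp only [mul_assoc]
      _ = adjoint α * RR q α (k + 2) := by rw [ih, RR_succ q α (k + 1), mul_assoc]

lemma star_RR (k : ℕ) : star (RR q α k) = RR q α k := by
  induction k with
  | zero => rw [RR_zero, star_one]
  | succ k ih =>
      have hcom : Commute (Ring.inverse (g q α k)) (RR q α k) := by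
        rw [RR]
        exact commute_list_map _
          (fun j => Commute.ringInverse_ringInverse (commute_g_g q α k j)) _
      rw [RR_succ, star_mul, star_inv_g, ih, hcom.eq]

omit hq1 in
lemma Gam_adj_pow (k : ℕ) :
    Gam α * adjoint α ^ k = ((q : ℂ) ^ (2 * k)) • (adjoint α ^ k * Gam α) := by
  induction k with
  | zero => simp
  | succ k ih =>
      calc Gam α * adjoint α ^ (k + 1)
          = (Gam α * adjoint α ^ k) * adjoint α := by rw [pow_succ, mul_assoc]
      _ = ((q : ℂ) ^ (2 * k)) • (adjoint α ^ k * (Gam α * adjoint α)) := by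
            rw [ih, smul_mul_assoc, mul_assoc]
      _ = ((q : ℂ) ^ (2 * k) * (q : ℂ) ^ 2) • (adjoint α ^ k * (adjoint α * Gam α)) := by
            rw [comm_Gam_adj q α hccr, mul_smul_comm, smul_smul]
      _ = ((q : ℂ) ^ (2 * (k + 1))) • (adjoint α ^ (k + 1) * Gam α) := by
            rw [← pow_add, show 2 * k + 2 = 2 * (k + 1) from by ring, pow_succ, mul_assoc]


-- ## Norm bound for RR

lemma norm_RR_le (k : ℕ) : ‖RR q α k‖ ≤ Cq q := by
  have hb0 : (0 : ℝ) ≤ q ^ 2 := sq_nonneg q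
  have hb1 : q ^ 2 < 1 := by nlinarith [sq_abs q, abs_nonneg q]
  have h2 : (0 : ℝ) < 1 - q ^ 2 := by linarith
  have hstep : ∀ k : ℕ, ‖RR q α k‖ ≤
      Real.exp ((∑ j ∈ Finset.range k, (q ^ 2) ^ (j + 1)) / (1 - q ^ 2)) := by
    intro k
    induction k with
    | zero =>
        rw [RR_zero]
        have h1 : ‖(1 : H →L[ℂ] H)‖ ≤ 1 := by
          rw [ContinuousLinearMap.one_def]; exact norm_id_le
        simpa using h1
    | succ k ih =>
        have hinv : ‖Ring.inverse (g q α k)‖ ≤ (1 - (q ^ 2) ^ (k + 1))⁻¹ :=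
          norm_inv_g_le q α hccr hq1 k
        have hexp : (1 - (q ^ 2) ^ (k + 1))⁻¹ ≤ Real.exp ((q ^ 2) ^ (k + 1) / (1 - q ^ 2)) :=
          inv_one_sub_le_exp hb1 (by positivity)
            (by simpa using pow_le_pow_of_le_one hb0 hb1.le (Nat.le_add_left 1 k))
        calc ‖RR q α (k + 1)‖ ≤ ‖RR q α k‖ * ‖Ring.inverse (g q α k)‖ := by
              rw [RR_succ]; exact norm_mul_le _ _
        _ ≤ Real.exp ((∑ j ∈ Finset.range k, (q ^ 2) ^ (j + 1)) / (1 - q ^ 2)) *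
              Real.exp ((q ^ 2) ^ (k + 1) / (1 - q ^ 2)) := by
              apply mul_le_mul ih (hinv.trans hexp) (norm_nonneg _) (Real.exp_nonneg _)
        _ = Real.exp ((∑ j ∈ Finset.range (k + 1), (q ^ 2) ^ (j + 1)) / (1 - q ^ 2)) := by
              rw [← Real.exp_add, Finset.sum_range_succ, add_div]
  refine (hstep k).trans ?_
  rw [Cq, Real.exp_le_exp]
  have hsum : (∑ j ∈ Finset.range k, (q ^ 2) ^ (j + 1)) ≤ q ^ 2 / (1 - q ^ 2) := by
    have h3 : (∑ j ∈ Finset.range k, (q ^ 2) ^ (j + 1)) =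
        q ^ 2 * ∑ j ∈ Finset.range k, (q ^ 2) ^ j := by
      rw [Finset.mul_sum]
      exact Finset.sum_congr rfl fun j _ => by rw [pow_succ']
    have h4 : (∑ j ∈ Finset.range k, (q ^ 2) ^ j) ≤ (1 - q ^ 2)⁻¹ := by
      rw [geom_sum_eq (by nlinarith : (q : ℝ) ^ 2 ≠ 1)]
      have h5 : ((q ^ 2) ^ k - 1) / (q ^ 2 - 1) = (1 - (q ^ 2) ^ k) / (1 - q ^ 2) := by
        rw [div_eq_div_iff (by linarith) (by linarith)]
        ring
      rw [h5, ← one_div (1 - q ^ 2)]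
      gcongr
      nlinarith [pow_nonneg hb0 k]
    calc (∑ j ∈ Finset.range k, (q ^ 2) ^ (j + 1))
        = q ^ 2 * ∑ j ∈ Finset.range k, (q ^ 2) ^ j := h3
    _ ≤ q ^ 2 * (1 - q ^ 2)⁻¹ := mul_le_mul_of_nonneg_left h4 hb0
    _ = q ^ 2 / (1 - q ^ 2) := (div_eq_mul_inv _ _).symm
  calc (∑ j ∈ Finset.range k, (q ^ 2) ^ (j + 1)) / (1 - q ^ 2)
      ≤ (q ^ 2 / (1 - q ^ 2)) / (1 - q ^ 2) := by gcongr
  _ = q ^ 2 / ((1 - q ^ 2) * (1 - q ^ 2)) := div_div _ _ _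


-- ## Projection lemmas

lemma P_mul_P (k d : ℕ) :
    (adjoint α ^ k * RR q α k * α ^ k) *
      (adjoint α ^ (k + d) * RR q α (k + d) * α ^ (k + d)) =
    adjoint α ^ (k + d) * RR q α (k + d) * α ^ (k + d) := by
  have key : ∀ y : H →L[ℂ] H, RR q α k * (α ^ k * (adjoint α ^ k * y)) = y := fun y => by
    rw [← mul_assoc (α ^ k), pow_mul_adj_pow q α hccr, ← mul_assoc,
      RR_mul_DD q α hccr hq1, one_mul]
  have expand : adjoint α ^ (k + d) * RR q α (k + d) * α ^ (k + d) =
      adjoint α ^ k * (adjoint α ^ d * (RR q α (k + d) * α ^ (k + d))) := by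
    rw [pow_add]; simp only [mul_assoc]
  rw [expand]
  simp only [mul_assoc]
  rw [key]

lemma star_P (k : ℕ) :
    star (adjoint α ^ k * RR q α k * α ^ k) = adjoint α ^ k * RR q α k * α ^ k := by
  rw [star_mul, star_mul, star_RR q α hccr hq1, star_pow, star_pow, star_eq_adjoint α,
    star_eq_adjoint (adjoint α), adjoint_adjoint]
  simp only [mul_assoc]

lemma adjoint_P (k : ℕ) :
    adjoint (adjoint α ^ k * RR q α k * α ^ k) = adjoint α ^ k * RR q α k * α ^ k := by
  rw [← star_eq_adjoint]; exact star_P q α hccr hq1 k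

lemma inner_P (k d : ℕ) (ξ : H) :
    (inner ℂ ((adjoint α ^ k * RR q α k * α ^ k) ξ)
      ((adjoint α ^ (k + d) * RR q α (k + d) * α ^ (k + d)) ξ) : ℂ) =
    inner ℂ ξ ((adjoint α ^ (k + d) * RR q α (k + d) * α ^ (k + d)) ξ) := by
  have h1 := adjoint_inner_left (adjoint α ^ k * RR q α k * α ^ k)
    ((adjoint α ^ (k + d) * RR q α (k + d) * α ^ (k + d)) ξ) ξ
  rw [adjoint_P q α hccr hq1 k] at h1
  rw [h1]
  congr 1
  rw [← ContinuousLinearMap.mul_apply, P_mul_P q α hccr hq1 k d]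

lemma norm_P_apply_le (k : ℕ) (ξ : H) :
    ‖(adjoint α ^ k * RR q α k * α ^ k) ξ‖ ≤ ‖ξ‖ := by
  set Pk := adjoint α ^ k * RR q α k * α ^ k with hPk
  have h1 : (inner ℂ (Pk ξ) (Pk ξ) : ℂ) = inner ℂ ξ (Pk ξ) := by
    have := inner_P q α hccr hq1 k 0 ξ
    exact this
  have h2 : ‖Pk ξ‖ ^ 2 = Complex.re (inner ℂ (Pk ξ) (Pk ξ) : ℂ) :=
    (inner_self_eq_norm_sq (𝕜 := ℂ) (Pk ξ)).symm
  have h3 : Complex.re (inner ℂ ξ (Pk ξ) : ℂ) ≤ ‖ξ‖ * ‖Pk ξ‖ := by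
    have h4 := Complex.re_le_norm (inner ℂ ξ (Pk ξ) : ℂ)
    have h5 : ‖(inner ℂ ξ (Pk ξ) : ℂ)‖ = ‖(inner ℂ ξ (Pk ξ) : ℂ)‖ := rfl
    have h6 := norm_inner_le_norm (𝕜 := ℂ) ξ (Pk ξ)
    linarith
  rw [h1] at h2
  nlinarith [norm_nonneg (Pk ξ), norm_nonneg ξ]

lemma norm_P_le (k : ℕ) : ‖adjoint α ^ k * RR q α k * α ^ k‖ ≤ 1 :=
  opNorm_le_bound _ zero_le_one (by simpa using norm_P_apply_le q α hccr hq1 k)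

omit hccr hq1 in
lemma norm_pow_le_one {x : H →L[ℂ] H} (hx : ‖x‖ ≤ 1) (k : ℕ) : ‖x ^ k‖ ≤ 1 := by
  induction k with
  | zero =>
      rw [pow_zero, ContinuousLinearMap.one_def]
      exact norm_id_le
  | succ k ih =>
      rw [pow_succ]
      calc ‖x ^ k * x‖ ≤ ‖x ^ k‖ * ‖x‖ := norm_mul_le _ _
      _ ≤ 1 * 1 := mul_le_mul ih hx (norm_nonneg _) zero_le_one
      _ = 1 := mul_one 1

lemma norm_Gam_P_le (k : ℕ) :
    ‖Gam α * (adjoint α ^ k * RR q α k * α ^ k)‖ ≤ Cq q * (q ^ 2) ^ k := by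
  have heq : Gam α * (adjoint α ^ k * RR q α k * α ^ k) =
      ((q : ℂ) ^ (2 * k)) • (adjoint α ^ k * (Gam α * (RR q α k * α ^ k))) := by
    simp only [← mul_assoc]
    rw [Gam_adj_pow q α hccr]
    simp only [smul_mul_assoc, mul_assoc]
  rw [heq, norm_smul]
  have hc : ‖((q : ℂ) ^ (2 * k))‖ = (q ^ 2) ^ k := by
    rw [norm_pow, Complex.norm_real, Real.norm_eq_abs, pow_mul, sq_abs]
  rw [hc]
  have hb0 : (0 : ℝ) ≤ (q ^ 2) ^ k := by positivity
  have hAk : ‖adjoint α ^ k‖ ≤ 1 := norm_pow_le_one (norm_adj_le_one q α hccr hq1) k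
  have hak : ‖α ^ k‖ ≤ 1 := norm_pow_le_one (norm_alpha_le_one q α hccr hq1) k
  have hΓ : ‖Gam α‖ ≤ 1 := norm_Gam_le_one q α hccr hq1
  have hR : ‖RR q α k‖ ≤ Cq q := norm_RR_le q α hccr hq1 k
  have hC0 : (0 : ℝ) ≤ Cq q := (Real.exp_nonneg _)
  have h1 : ‖RR q α k * α ^ k‖ ≤ Cq q := by
    calc ‖RR q α k * α ^ k‖ ≤ ‖RR q α k‖ * ‖α ^ k‖ := norm_mul_le _ _
    _ ≤ Cq q * 1 := mul_le_mul hR hak (norm_nonneg _) hC0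
    _ = Cq q := mul_one _
  have h2 : ‖Gam α * (RR q α k * α ^ k)‖ ≤ Cq q := by
    calc ‖Gam α * (RR q α k * α ^ k)‖ ≤ ‖Gam α‖ * ‖RR q α k * α ^ k‖ := norm_mul_le _ _
    _ ≤ 1 * Cq q := mul_le_mul hΓ h1 (norm_nonneg _) zero_le_one
    _ = Cq q := one_mul _
  have h3 : ‖adjoint α ^ k * (Gam α * (RR q α k * α ^ k))‖ ≤ Cq q := by
    calc ‖adjoint α ^ k * (Gam α * (RR q α k * α ^ k))‖
        ≤ ‖adjoint α ^ k‖ * ‖Gam α * (RR q α k * α ^ k)‖ := norm_mul_le _ _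
    _ ≤ 1 * Cq q := mul_le_mul hAk h2 (norm_nonneg _) zero_le_one
    _ = Cq q := one_mul _
  calc (q ^ 2) ^ k * ‖adjoint α ^ k * (Gam α * (RR q α k * α ^ k))‖
      ≤ (q ^ 2) ^ k * Cq q := mul_le_mul_of_nonneg_left h3 hb0
  _ = Cq q * (q ^ 2) ^ k := mul_comm _ _

-- ## The telescoping recursion

omit hq1 in
lemma hg0' : ((1 : ℂ) - (q : ℂ) ^ 2) • (1 : H →L[ℂ] H) + ((q : ℂ) ^ 2) • (adjoint α * α) =
    g q α 0 := by
  rw [g_zero_eq q α hccr, Gam]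
  module

lemma RR_adj (k : ℕ) :
    RR q α k * adjoint α = adjoint α * RR q α (k + 1) * g q α 0 := by
  have h := RR_adj_invg0 q α hccr hq1 k
  have hu := isUnit_g q α hccr hq1 0
  calc RR q α k * adjoint α
      = RR q α k * adjoint α * (Ring.inverse (g q α 0) * g q α 0) := by
        rw [Ring.inverse_mul_cancel _ hu, mul_one]
  _ = (RR q α k * adjoint α * Ring.inverse (g q α 0)) * g q α 0 := by
        simp only [mul_assoc]
  _ = adjoint α * RR q α (k + 1) * g q α 0 := by rw [h]

lemma T_rec (k : ℕ) :
    adjoint α ^ k * RR q α k * (adjoint α * α) * α ^ k =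
      ((1 : ℂ) - (q : ℂ) ^ 2) • (adjoint α ^ (k + 1) * RR q α (k + 1) * α ^ (k + 1)) +
      ((q : ℂ) ^ 2) •
        (adjoint α ^ (k + 1) * RR q α (k + 1) * (adjoint α * α) * α ^ (k + 1)) := by
  calc adjoint α ^ k * RR q α k * (adjoint α * α) * α ^ k
      = adjoint α ^ k * ((RR q α k * adjoint α) * (α * α ^ k)) := by
        simp only [mul_assoc]
  _ = adjoint α ^ k * ((adjoint α * RR q α (k + 1) * g q α 0) * (α * α ^ k)) := by
        rw [RR_adj q α hccr hq1]
  _ = adjoint α ^ (k + 1) * RR q α (k + 1) *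
        ((((1 : ℂ) - (q : ℂ) ^ 2) • (1 : H →L[ℂ] H) + ((q : ℂ) ^ 2) • (adjoint α * α)) *
          α ^ (k + 1)) := by
        rw [hg0' q α hccr, pow_succ (adjoint α) k, pow_succ' α k]
        simp only [mul_assoc]
  _ = ((1 : ℂ) - (q : ℂ) ^ 2) • (adjoint α ^ (k + 1) * RR q α (k + 1) * α ^ (k + 1)) +
      ((q : ℂ) ^ 2) •
        (adjoint α ^ (k + 1) * RR q α (k + 1) * (adjoint α * α) * α ^ (k + 1)) := by
        simp only [mul_add, add_mul, smul_mul_assoc, mul_smul_comm, one_mul, mul_assoc]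

lemma Ssum (n : ℕ) :
    ∑ k ∈ Finset.range (n + 1), ((q : ℂ) ^ (2 * k)) •
        (adjoint α ^ k * RR q α k * α ^ k -
          adjoint α ^ (k + 1) * RR q α (k + 1) * α ^ (k + 1)) =
      Gam α + ((q : ℂ) ^ (2 * n)) •
        (adjoint α ^ n * RR q α n * (adjoint α * α) * α ^ n -
          adjoint α ^ (n + 1) * RR q α (n + 1) * α ^ (n + 1)) := by
  induction n with
  | zero =>
      simp only [zero_add, Finset.sum_range_one, Nat.mul_zero, pow_zero, one_smul, RR_zero,
        one_mul, mul_one, Gam]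
      abel
  | succ n ih =>
      rw [Finset.sum_range_succ, ih, T_rec q α hccr hq1 n]
      have hq2 : ((q : ℂ)) ^ (2 * (n + 1)) = (q : ℂ) ^ (2 * n) * (q : ℂ) ^ 2 := by
        rw [← pow_add, show 2 * n + 2 = 2 * (n + 1) from by ring]
      rw [hq2]
      module

end algebra

end QCCR

open QCCR
set_option maxHeartbeats 1000000

/-- **Spectral decomposition of `Γ`.** If `Γ` is injective then `P_k → 0` strongly,
the `E_k` sum strongly to the identity, and `Γ = Σ_k q^{2k} E_k` with the series
converging in operator norm. -/
theorem qCCR_spectral_decomposition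
    {H : Type*} [NormedAddCommGroup H] [InnerProductSpace ℂ H] [CompleteSpace H]
    (q : ℝ) (hq0 : q ≠ 0) (hq1 : |q| < 1)
    (α : H →L[ℂ] H)
    (hccr : α * adjoint α - ((q : ℂ) ^ 2) • (adjoint α * α) =
      ((1 : ℂ) - (q : ℂ) ^ 2) • (1 : H →L[ℂ] H))
    (hinj : Function.Injective ((1 : H →L[ℂ] H) - adjoint α * α)) :
    (∀ ξ : H, Tendsto (fun k : ℕ => qCCRProj q α k ξ) atTop (nhds 0)) ∧
    (∀ ξ : H,
      Tendsto (fun n : ℕ => ∑ k ∈ Finset.range n, qCCRSpec q α k ξ) atTop (nhds ξ)) ∧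
    Tendsto
      (fun n : ℕ => ∑ k ∈ Finset.range n, ((q : ℂ) ^ (2 * k)) • qCCRSpec q α k)
      atTop (nhds ((1 : H →L[ℂ] H) - adjoint α * α)) := by
  have hb0 : (0 : ℝ) ≤ q ^ 2 := sq_nonneg q
  have hb1 : q ^ 2 < 1 := by nlinarith [sq_abs q, abs_nonneg q]
  have hC0 : (0 : ℝ) ≤ Cq q := Real.exp_nonneg _
  -- Part 1 : strong convergence of the P_k to 0
  have part1 : ∀ ξ : H, Tendsto (fun k : ℕ => qCCRProj q α k ξ) atTop (nhds 0) := by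
    intro ξ
    set x : ℕ → H := fun k => qCCRProj q α k ξ with hx
    have hinner : ∀ k d : ℕ, (inner ℂ (x k) (x (k + d)) : ℂ) = inner ℂ ξ (x (k + d)) :=
      fun k d => inner_P q α hccr hq1 k d ξ
    set c : ℕ → ℝ := fun m => ‖x m‖ ^ 2 with hc
    have hsq : ∀ m : ℕ, c m = RCLike.re (inner ℂ ξ (x m) : ℂ) := by
      intro m
      have h := hinner m 0
      rw [Nat.add_zero] at h
      rw [hc]
      dsimp only
      rw [← inner_self_eq_norm_sq (𝕜 := ℂ) (x m), h]
    have hdist : ∀ k d : ℕ, ‖x k - x (k + d)‖ ^ 2 = c k - c (k + d) := by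
      intro k d
      have h1 := norm_sub_sq (𝕜 := ℂ) (x k) (x (k + d))
      rw [hinner k d] at h1
      have h2 := hsq (k + d)
      have h2' := hsq k
      have h3 : c k = ‖x k‖ ^ 2 := rfl
      have h4 : c (k + d) = ‖x (k + d)‖ ^ 2 := rfl
      linarith
    have hanti : Antitone c := by
      apply antitone_nat_of_succ_le
      intro n
      have := hdist n 1
      nlinarith [sq_nonneg ‖x n - x (n + 1)‖]
    have hcauchy_c : CauchySeq c := by
      have : Tendsto c atTop (nhds (⨅ m, c m)) :=
        tendsto_atTop_ciInf hanti ⟨0, by rintro y ⟨m, rfl⟩; positivity⟩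
      exact this.cauchySeq
    have hcauchy : CauchySeq x := by
      rw [Metric.cauchySeq_iff] at hcauchy_c ⊢
      intro ε hε
      obtain ⟨N, hN⟩ := hcauchy_c (ε ^ 2) (by positivity)
      refine ⟨N, fun m hm n hn => ?_⟩
      have key : ∀ a b : ℕ, a ≤ b → N ≤ a → N ≤ b → dist (x a) (x b) < ε := by
        intro a b hab ha hb
        obtain ⟨d, rfl⟩ := Nat.le.dest hab
        have h1 := hN a ha (a + d) hb
        rw [Real.dist_eq] at h1
        have h2 : |c a - c (a + d)| = c a - c (a + d) := by
          rw [abs_of_nonneg]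
          have := hanti (Nat.le_add_right a d)
          linarith
        rw [h2] at h1
        rw [dist_eq_norm]
        have h3 := hdist a d
        nlinarith [norm_nonneg (x a - x (a + d))]
      rcases le_total m n with h | h
      · exact key m n h hm hn
      · rw [dist_comm]; exact key n m h hn hm
    obtain ⟨η, hη⟩ := cauchySeq_tendsto_of_complete hcauchy
    have hGam0 : Tendsto (fun k => Gam α (x k)) atTop (nhds 0) := by
      have hbound : ∀ k : ℕ, ‖Gam α (x k)‖ ≤ (Cq q * ‖ξ‖) * (q ^ 2) ^ k := by
        intro k
        have h1 : Gam α (x k) = (Gam α * (adjoint α ^ k * RR q α k * α ^ k)) ξ := rfl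
        rw [h1]
        calc ‖(Gam α * (adjoint α ^ k * RR q α k * α ^ k)) ξ‖
            ≤ ‖Gam α * (adjoint α ^ k * RR q α k * α ^ k)‖ * ‖ξ‖ :=
              ContinuousLinearMap.le_opNorm _ ξ
        _ ≤ (Cq q * (q ^ 2) ^ k) * ‖ξ‖ :=
              mul_le_mul_of_nonneg_right (norm_Gam_P_le q α hccr hq1 k) (norm_nonneg ξ)
        _ = (Cq q * ‖ξ‖) * (q ^ 2) ^ k := by ring
      have htend : Tendsto (fun k : ℕ => (Cq q * ‖ξ‖) * (q ^ 2) ^ k) atTop (nhds 0) := by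
        have := (tendsto_pow_atTop_nhds_zero_of_lt_one hb0 hb1).const_mul (Cq q * ‖ξ‖)
        simpa using this
      exact squeeze_zero_norm hbound htend
    have hGamEta : Gam α η = 0 := by
      have h1 : Tendsto (fun k => Gam α (x k)) atTop (nhds (Gam α η)) :=
        ((Gam α).continuous.tendsto η).comp hη
      exact tendsto_nhds_unique h1 hGam0
    have hη0 : η = 0 := by
      apply hinj
      rw [map_zero]
      exact hGamEta
    rwa [hη0] at hη
  refine ⟨part1, ?_, ?_⟩
  -- Part 2
  · intro ξ
    have hsum : ∀ n : ℕ, (∑ k ∈ Finset.range n, qCCRSpec q α k ξ) = ξ - qCCRProj q α n ξ := by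
      intro n
      have h1 : ∀ k : ℕ, qCCRSpec q α k ξ = qCCRProj q α k ξ - qCCRProj q α (k + 1) ξ :=
        fun k => rfl
      calc (∑ k ∈ Finset.range n, qCCRSpec q α k ξ)
          = ∑ k ∈ Finset.range n, (qCCRProj q α k ξ - qCCRProj q α (k + 1) ξ) := by
            exact Finset.sum_congr rfl fun k _ => h1 k
      _ = qCCRProj q α 0 ξ - qCCRProj q α n ξ :=
            Finset.sum_range_sub' (fun k => qCCRProj q α k ξ) n
      _ = ξ - qCCRProj q α n ξ := by
            have h0 : qCCRProj q α 0 = 1 := by simp [qCCRProj]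
            rw [h0, ContinuousLinearMap.one_apply]
    simp only [hsum]
    have := tendsto_const_nhds (α := ℕ) (x := ξ) |>.sub (part1 ξ)
    simpa using this
  -- Part 3
  · have key : ∀ n : ℕ,
        (∑ k ∈ Finset.range (n + 1), ((q : ℂ) ^ (2 * k)) • qCCRSpec q α k) - Gam α =
        ((q : ℂ) ^ (2 * n)) •
          (adjoint α ^ n * RR q α n * (adjoint α * α) * α ^ n -
            adjoint α ^ (n + 1) * RR q α (n + 1) * α ^ (n + 1)) := by
      intro n
      have hSpec : ∀ k : ℕ, qCCRSpec q α k =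
          adjoint α ^ k * RR q α k * α ^ k -
            adjoint α ^ (k + 1) * RR q α (k + 1) * α ^ (k + 1) := fun k => rfl
      simp only [hSpec]
      rw [Ssum q α hccr hq1 n]
      abel
    have hTnorm : ∀ n : ℕ,
        ‖adjoint α ^ n * RR q α n * (adjoint α * α) * α ^ n -
          adjoint α ^ (n + 1) * RR q α (n + 1) * α ^ (n + 1)‖ ≤ Cq q + 1 := by
      intro n
      have hAk : ‖adjoint α ^ n‖ ≤ 1 := norm_pow_le_one (norm_adj_le_one q α hccr hq1) n
      have hak : ‖α ^ n‖ ≤ 1 := norm_pow_le_one (norm_alpha_le_one q α hccr hq1) n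
      have hN : ‖adjoint α * α‖ ≤ 1 := by
        calc ‖adjoint α * α‖ ≤ ‖adjoint α‖ * ‖α‖ := norm_mul_le _ _
        _ ≤ 1 * 1 := mul_le_mul (norm_adj_le_one q α hccr hq1)
              (norm_alpha_le_one q α hccr hq1) (norm_nonneg _) zero_le_one
        _ = 1 := mul_one 1
      have hR : ‖RR q α n‖ ≤ Cq q := norm_RR_le q α hccr hq1 n
      have hT : ‖adjoint α ^ n * RR q α n * (adjoint α * α) * α ^ n‖ ≤ Cq q := by
        calc ‖adjoint α ^ n * RR q α n * (adjoint α * α) * α ^ n‖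
            ≤ ‖adjoint α ^ n * RR q α n * (adjoint α * α)‖ * ‖α ^ n‖ := norm_mul_le _ _
        _ ≤ (‖adjoint α ^ n * RR q α n‖ * ‖adjoint α * α‖) * ‖α ^ n‖ := by
              exact mul_le_mul_of_nonneg_right (norm_mul_le _ _) (norm_nonneg _)
        _ ≤ ((‖adjoint α ^ n‖ * ‖RR q α n‖) * ‖adjoint α * α‖) * ‖α ^ n‖ := by
              exact mul_le_mul_of_nonneg_right
                (mul_le_mul_of_nonneg_right (norm_mul_le _ _) (norm_nonneg _)) (norm_nonneg _)
        _ ≤ ((1 * Cq q) * 1) * 1 := by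
              apply mul_le_mul _ hak (norm_nonneg _) (by positivity)
              apply mul_le_mul _ hN (norm_nonneg _) (by positivity)
              exact mul_le_mul hAk hR (norm_nonneg _) zero_le_one
        _ = Cq q := by ring
      have hP1 : ‖adjoint α ^ (n + 1) * RR q α (n + 1) * α ^ (n + 1)‖ ≤ 1 :=
        norm_P_le q α hccr hq1 (n + 1)
      calc ‖adjoint α ^ n * RR q α n * (adjoint α * α) * α ^ n -
            adjoint α ^ (n + 1) * RR q α (n + 1) * α ^ (n + 1)‖
          ≤ ‖adjoint α ^ n * RR q α n * (adjoint α * α) * α ^ n‖ +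
            ‖adjoint α ^ (n + 1) * RR q α (n + 1) * α ^ (n + 1)‖ := norm_sub_le _ _
      _ ≤ Cq q + 1 := add_le_add hT hP1
    have hshift : Tendsto
        (fun n : ℕ => ∑ k ∈ Finset.range (n + 1), ((q : ℂ) ^ (2 * k)) • qCCRSpec q α k)
        atTop (nhds (Gam α)) := by
      rw [tendsto_iff_norm_sub_tendsto_zero]
      have hbound : ∀ n : ℕ,
          ‖(∑ k ∈ Finset.range (n + 1), ((q : ℂ) ^ (2 * k)) • qCCRSpec q α k) - Gam α‖ ≤
            (Cq q + 1) * (q ^ 2) ^ n := by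
        intro n
        rw [key n, norm_smul]
        have hcoef : ‖((q : ℂ) ^ (2 * n))‖ = (q ^ 2) ^ n := by
          rw [norm_pow, Complex.norm_real, Real.norm_eq_abs, pow_mul, sq_abs]
        rw [hcoef]
        calc (q ^ 2) ^ n * ‖adjoint α ^ n * RR q α n * (adjoint α * α) * α ^ n -
              adjoint α ^ (n + 1) * RR q α (n + 1) * α ^ (n + 1)‖
            ≤ (q ^ 2) ^ n * (Cq q + 1) := by
              exact mul_le_mul_of_nonneg_left (hTnorm n) (by positivity)
        _ = (Cq q + 1) * (q ^ 2) ^ n := by ring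
      have htend : Tendsto (fun n : ℕ => (Cq q + 1) * (q ^ 2) ^ n) atTop (nhds 0) := by
        have := (tendsto_pow_atTop_nhds_zero_of_lt_one hb0 hb1).const_mul (Cq q + 1)
        simpa using this
      exact squeeze_zero (fun n => norm_nonneg _) hbound htend
    exact (tendsto_add_atTop_iff_nat 1).mp hshift
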